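/- Let M ⊆ A_n be a macro set whose growth is polylogarithmic: |M ∩ B_G(r)| ≤ c(log(e + r))^q for all r ≥ 0, for some constants c, q > 0. Then there exists a constant K > 0 depending only on n, c, q such that f_{G'}(s) ≤ exp(K · s · log s) for all integers s ≥ 2. -/

import Mathlib

open scoped ENNReal BigOperators

/-- The length of an element of the free abelian monoid `A_n = ℕ^n` with respect to the
standard generators `G = {a_1, …, a_n}`: the sum of its coordinates. -/
def glen {n : ℕ} (w : Fin n → ℕ) : ℕ := ∑ j, w j

/-- The standard generating set `G` of `A_n = ℕ^n`: the standard basis vectors. -/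
def gens (n : ℕ) : Set (Fin n → ℕ) := {w | ∃ i : Fin n, w = fun t => if t = i then 1 else 0}

/-- The length of `w` with respect to a generating set `S`: the minimum number of elements
of `S` (with repetition) summing to `w`; `⊤` if `w` is not representable. -/
noncomputable def slen {n : ℕ} (S : Set (Fin n → ℕ)) (w : Fin n → ℕ) : ℕ∞ :=
  sInf {k : ℕ∞ | ∃ l : Multiset (Fin n → ℕ), (∀ x ∈ l, x ∈ S) ∧ l.sum = w ∧ (l.card : ℕ∞) = k}

/-- The expansion function `f_{G'}(s) = sup { r ∈ ℕ : B_G(r) ⊆ B_{G'}(s) }`, valued in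
`ℝ≥0∞` (so that `⊤` means the ball inclusion holds for every radius `r`). -/
noncomputable def expansion {n : ℕ} (S : Set (Fin n → ℕ)) (s : ℕ) : ℝ≥0∞ :=
  sSup {x : ℝ≥0∞ | ∃ r : ℕ, x = (r : ℝ≥0∞) ∧ ∀ w : Fin n → ℕ, glen w ≤ r → slen S w ≤ (s : ℕ∞)}

lemma glen_add {n : ℕ} (a b : Fin n → ℕ) : glen (a + b) = glen a + glen b := by
  simp [glen, Finset.sum_add_distrib]

lemma glen_sum {n : ℕ} (l : Multiset (Fin n → ℕ)) : glen l.sum = (l.map glen).sum := by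
  induction l using Multiset.induction with
  | empty => simp [glen]
  | cons a l ih => simp [glen_add, ih]

lemma exists_of_slen_le {n s : ℕ} {S : Set (Fin n → ℕ)} {w : Fin n → ℕ}
    (h : slen S w ≤ (s : ℕ∞)) :
    ∃ l : Multiset (Fin n → ℕ), (∀ x ∈ l, x ∈ S) ∧ l.sum = w ∧ l.card ≤ s := by
  by_contra hcon
  push_neg at hcon
  have hge : ((s : ℕ∞) + 1) ≤ slen S w := by
    apply le_sInf
    rintro k ⟨l, h1, h2, rfl⟩
    have : s < l.card := hcon l h1 h2
    have : s + 1 ≤ l.card := this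
    exact_mod_cast this
  have h2 : (s : ℕ∞) + 1 ≤ (s : ℕ∞) := hge.trans h
  have h3 : s + 1 ≤ s := by exact_mod_cast h2
  omega

set_option maxHeartbeats 1000000 in
/-- **Polylogarithmic density gives at most quasi-exponential expansion.**
If the macro set `M ⊆ A_n` satisfies `|M ∩ B_G(r)| ≤ c(log(e + r))^q` for all `r ≥ 0`
(with constants `c, q > 0`), then there is `K > 0` depending only on `n, c, q` such that
`f_{G'}(s) ≤ exp(K·s·log s)` for all `s ≥ 2`. -/
theorem polylog_density_quasiexponential_expansion
    (n : ℕ) (hn : 1 ≤ n) (c q : ℝ) (hc : 0 < c) (hq : 0 < q)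
    (M : Set (Fin n → ℕ))
    (hM : ∀ r : ℕ, ((M ∩ {w | glen w ≤ r}).ncard : ℝ)
            ≤ c * (Real.log (Real.exp 1 + r)) ^ q) :
    ∃ K : ℝ, 0 < K ∧ ∀ s : ℕ, 2 ≤ s →
      expansion (gens n ∪ M) s ≤ ENNReal.ofReal (Real.exp (K * s * Real.log s)) := by
  set A : ℝ := Real.log (1 + n + c) with hAdef
  have hA : 0 < A := by
    apply Real.log_pos
    have : (1:ℝ) ≤ (n:ℝ) := by exact_mod_cast hn
    linarith
  set C : ℝ := 1 + A + 2 * q with hCdef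
  have hC1 : 1 ≤ C := by linarith
  have hlogC : 0 ≤ Real.log C := Real.log_nonneg hC1
  have hlog2 : 0 < Real.log 2 := Real.log_pos (by norm_num)
  set D : ℝ := 2 + 2 * Real.log C / Real.log 2 with hDdef
  have hD : 0 < D := by positivity
  refine ⟨A / Real.log 2 + q * D, by positivity, ?_⟩
  set K : ℝ := A / Real.log 2 + q * D with hKdef
  intro s hs
  apply sSup_le
  rintro x ⟨r, rfl, hP⟩
  -- The ball B_G(r)
  set B : Set (Fin n → ℕ) := {w | glen w ≤ r} with hBdef
  have hBsub : B ⊆ Set.pi Set.univ (fun _ : Fin n => Set.Iic r) := by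
    intro w hw j _
    have : w j ≤ glen w := Finset.single_le_sum (f := w) (fun i _ => Nat.zero_le _)
      (Finset.mem_univ j)
    exact this.trans hw
  have hBfin : B.Finite :=
    Set.Finite.subset (Set.Finite.pi (fun _ => Set.finite_Iic r)) hBsub
  -- the macro generating set restricted to the ball, plus 0
  set T : Set (Fin n → ℕ) := insert 0 (gens n ∪ (M ∩ B)) with hTdef
  have hgensfin : (gens n).Finite := by
    have : gens n ⊆ (fun i : Fin n => fun t => if t = i then 1 else 0) '' Set.univ := by
      rintro w ⟨i, rfl⟩; exact ⟨i, Set.mem_univ i, rfl⟩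
    exact Set.Finite.subset (Set.Finite.image _ Set.finite_univ) this
  have hTfin : T.Finite :=
    (hgensfin.union (hBfin.subset Set.inter_subset_right)).insert 0
  set m : ℕ := T.ncard with hmdef
  -- every element of the ball is a sum of s elements of T
  have hrep : ∀ w ∈ B, ∃ f : Fin s → (Fin n → ℕ), (∀ i, f i ∈ T) ∧ ∑ i, f i = w := by
    intro w hw
    obtain ⟨l, hl1, hl2, hl3⟩ := exists_of_slen_le (hP w hw)
    have hmemT : ∀ x ∈ l, x ∈ T := by
      intro x hx
      have hgx : glen x ≤ r := by
        have h1 : glen x ≤ (l.map glen).sum :=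
          Multiset.single_le_sum (fun y _ => Nat.zero_le y) _ (Multiset.mem_map_of_mem _ hx)
        have h2 : (l.map glen).sum = glen w := by rw [← glen_sum, hl2]
        exact (h1.trans_eq h2).trans hw
      rcases hl1 x hx with h | h
      · exact Set.mem_insert_of_mem _ (Or.inl h)
      · exact Set.mem_insert_of_mem _ (Or.inr ⟨h, hgx⟩)
    set l' : Multiset (Fin n → ℕ) := l + Multiset.replicate (s - l.card) 0 with hl'def
    have hcard' : l'.card = s := by
      simp [hl'def, Multiset.card_replicate]
      omega
    have hsum' : l'.sum = w := by
      simp [hl'def, Multiset.sum_replicate, hl2]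
    have hmem' : ∀ x ∈ l', x ∈ T := by
      intro x hx
      rcases Multiset.mem_add.1 hx with h | h
      · exact hmemT x h
      · rw [Multiset.eq_of_mem_replicate h]; exact Set.mem_insert _ _
    set L : List (Fin n → ℕ) := l'.toList with hLdef
    have hlen : L.length = s := by rw [hLdef, Multiset.length_toList, hcard']
    refine ⟨fun i => L.get (Fin.cast hlen.symm i), ?_, ?_⟩
    · intro i
      exact hmem' _ (Multiset.mem_toList.1 (L.get_mem _))
    · have h1 : ∑ i : Fin s, L.get (Fin.cast hlen.symm i) = ∑ i : Fin L.length, L.get i :=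
        Fintype.sum_equiv (finCongr hlen.symm) _ _ (fun i => rfl)
      rw [h1]
      rw [← List.sum_ofFn, List.ofFn_get]
      rw [hLdef, Multiset.sum_toList, hsum']
  -- counting: r + 1 ≤ B.ncard ≤ m ^ s
  have hpi : B ⊆ (fun f : Fin s → (Fin n → ℕ) => ∑ i, f i) ''
      (Set.pi Set.univ (fun _ : Fin s => T)) := by
    intro w hw
    obtain ⟨f, hf1, hf2⟩ := hrep w hw
    exact ⟨f, fun i _ => hf1 i, hf2⟩
  have hpifin : (Set.pi Set.univ (fun _ : Fin s => T)).Finite :=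
    Set.Finite.pi (fun _ => hTfin)
  have hpicard : (Set.pi Set.univ (fun _ : Fin s => T)).ncard = m ^ s := by
    rw [show Set.pi Set.univ (fun _ : Fin s => T)
        = ↑(Fintype.piFinset (fun _ : Fin s => hTfin.toFinset)) by
      rw [Fintype.coe_piFinset]; simp [hTdef]]
    rw [Set.ncard_coe_finset, Fintype.card_piFinset]
    have hc : (hTfin.toFinset).card = m := by
      rw [← Set.ncard_coe_finset, Set.Finite.coe_toFinset]
    rw [hc]
    simp
  have hupper : B.ncard ≤ m ^ s := by
    calc B.ncard ≤ ((fun f : Fin s → (Fin n → ℕ) => ∑ i, f i) ''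
        (Set.pi Set.univ (fun _ : Fin s => T))).ncard :=
          Set.ncard_le_ncard hpi (hpifin.image _)
      _ ≤ (Set.pi Set.univ (fun _ : Fin s => T)).ncard := Set.ncard_image_le hpifin
      _ = m ^ s := hpicard
  have hlower : r + 1 ≤ B.ncard := by
    set i0 : Fin n := ⟨0, hn⟩ with hi0
    set g : ℕ → (Fin n → ℕ) := fun k => fun t => if t = i0 then k else 0 with hg
    have hginj : Set.InjOn g (Set.Iic r) := by
      intro a _ b _ hab
      have := congrFun hab i0
      simpa [hg] using this
    have hgsub : g '' Set.Iic r ⊆ B := by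
      rintro _ ⟨k, hk, rfl⟩
      have : glen (g k) = k := by
        simp [glen, hg, Finset.sum_ite_eq']
      simpa [hBdef, this] using hk
    calc r + 1 = (Set.Iic r).ncard := by
          rw [← Finset.coe_Iic, Set.ncard_coe_finset, Nat.card_Iic]
      _ = (g '' Set.Iic r).ncard := (Set.ncard_image_of_injOn hginj).symm
      _ ≤ B.ncard := Set.ncard_le_ncard hgsub hBfin
  -- bound on m
  set L : ℝ := Real.log (Real.exp 1 + r) with hLdef
  have hL1 : 1 ≤ L := by
    rw [hLdef]
    calc (1:ℝ) = Real.log (Real.exp 1) := (Real.log_exp 1).symm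
      _ ≤ Real.log (Real.exp 1 + r) := Real.log_le_log (Real.exp_pos 1) (le_add_of_nonneg_right (Nat.cast_nonneg r))
  have hLq1 : 1 ≤ L ^ q := Real.one_le_rpow hL1 hq.le
  have hmR : (m : ℝ) ≤ (1 + n + c) * L ^ q := by
    have h1 : m ≤ 1 + ((gens n).ncard + (M ∩ B).ncard) := by
      calc m ≤ (gens n ∪ (M ∩ B)).ncard + 1 := Set.ncard_insert_le _ _
        _ ≤ ((gens n).ncard + (M ∩ B).ncard) + 1 := by
            exact Nat.add_le_add_right (Set.ncard_union_le _ _) 1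
        _ = 1 + ((gens n).ncard + (M ∩ B).ncard) := by omega
    have h2 : (gens n).ncard ≤ n := by
      have him : gens n ⊆ (fun i : Fin n => fun t => if t = i then 1 else 0) '' Set.univ := by
        rintro w ⟨i, rfl⟩; exact ⟨i, Set.mem_univ i, rfl⟩
      calc (gens n).ncard
          ≤ ((fun i : Fin n => fun t => if t = i then 1 else 0) '' Set.univ).ncard :=
            Set.ncard_le_ncard him (Set.Finite.image _ Set.finite_univ)
        _ ≤ (Set.univ : Set (Fin n)).ncard := Set.ncard_image_le Set.finite_univ
        _ = n := by simp [Set.ncard_univ]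
    have h3 : ((M ∩ B).ncard : ℝ) ≤ c * L ^ q := hM r
    have h4 : (m : ℝ) ≤ 1 + n + c * L ^ q := by
      have := h1
      have hcast : (m : ℝ) ≤ 1 + ((gens n).ncard + (M ∩ B).ncard : ℕ) := by exact_mod_cast h1
      have h2' : ((gens n).ncard : ℝ) ≤ n := by exact_mod_cast h2
      push_cast at hcast
      linarith
    have hn1 : (0:ℝ) ≤ 1 + n := by positivity
    have h5 := mul_le_mul_of_nonneg_left hLq1 hn1
    linarith only [h4, h5]
  have hm1 : 1 ≤ m := by
    have : T.Nonempty := ⟨0, Set.mem_insert _ _⟩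
    exact (Set.ncard_pos hTfin).2 this
  -- the key real inequality
  set R : ℝ := Real.log ((r : ℝ) + 1) with hRdef
  have hr1 : (0:ℝ) < (r:ℝ) + 1 := by positivity
  have hR0 : 0 ≤ R := Real.log_nonneg (by linarith)
  have hcount : (r : ℝ) + 1 ≤ (m : ℝ) ^ s := by
    have : ((r + 1 : ℕ) : ℝ) ≤ ((m ^ s : ℕ) : ℝ) := by exact_mod_cast hlower.trans hupper
    push_cast at this
    linarith
  have hmpos : (0:ℝ) < m := by exact_mod_cast hm1
  have hsR : (2:ℝ) ≤ (s:ℝ) := by exact_mod_cast hs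
  have hRm : R ≤ s * Real.log m := by
    calc R ≤ Real.log ((m:ℝ) ^ s) := Real.log_le_log hr1 hcount
      _ = s * Real.log m := Real.log_pow (m:ℝ) s
  have hLR : L ≤ 1 + R := by
    have h1 : Real.exp 1 + (r:ℝ) ≤ Real.exp 1 * ((r:ℝ) + 1) := by
      have he : (1:ℝ) ≤ Real.exp 1 := Real.one_le_exp (by norm_num)
      have h0 := mul_le_mul_of_nonneg_right he (Nat.cast_nonneg r : (0:ℝ) ≤ (r:ℝ))
      linarith only [h0]
    calc L ≤ Real.log (Real.exp 1 * ((r:ℝ) + 1)) :=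
          Real.log_le_log (by positivity) h1
      _ = 1 + R := by
          rw [Real.log_mul (Real.exp_pos 1).ne' hr1.ne', Real.log_exp]
  have hlogm : Real.log m ≤ A + q * Real.log (1 + R) := by
    have h1 : Real.log m ≤ Real.log ((1 + n + c) * L ^ q) :=
      Real.log_le_log hmpos hmR
    have h2 : Real.log ((1 + n + c) * L ^ q) = A + q * Real.log L := by
      rw [Real.log_mul (by positivity) (by positivity), Real.log_rpow (by linarith)]
    have h3 : Real.log L ≤ Real.log (1 + R) := Real.log_le_log (by linarith) hLR
    have h3' := mul_le_mul_of_nonneg_left h3 hq.le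
    linarith only [h1, h2, h3']
  have hstar : R ≤ s * A + s * q * Real.log (1 + R) := by
    have h0 := mul_le_mul_of_nonneg_left hlogm (by linarith : (0:ℝ) ≤ (s:ℝ))
    linarith only [hRm, h0]
  -- bootstrap step 1 : 1 + R ≤ (s*C)^2
  set u : ℝ := Real.sqrt (1 + R) with hudef
  have hu1 : 1 ≤ u := Real.one_le_sqrt.2 (by linarith)
  have hu2 : u ^ 2 = 1 + R := Real.sq_sqrt (by linarith)
  have hlogu : Real.log (1 + R) ≤ 2 * u := by
    have h1 : Real.log (1 + R) = 2 * Real.log u := by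
      rw [← hu2, Real.log_pow]; push_cast; ring
    have h2 : Real.log u ≤ u - 1 := Real.log_le_sub_one_of_pos (by linarith)
    linarith
  have hub : u ≤ s * C := by
    have h1 : u ^ 2 ≤ 1 + s * A + 2 * (s * q) * u := by
      have h0 := mul_le_mul_of_nonneg_left hlogu (by positivity : (0:ℝ) ≤ (s:ℝ) * q)
      linarith only [hu2, hstar, h0]
    have h2 : u ≤ 1 + s * A + 2 * s * q := by
      by_contra hcon
      push_neg at hcon
      have hu0 : (0:ℝ) < u := by linarith only [hu1]
      have hsA : (0:ℝ) ≤ (s:ℝ) * A := by positivity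
      have h5 := mul_lt_mul_of_pos_right hcon hu0
      have h6 := mul_le_mul_of_nonneg_left hu1 hsA
      nlinarith [h1, h5, h6, hu1]
    have h3 : 1 + s * A + 2 * s * q ≤ s * C := by
      rw [hCdef]
      have hsA : (0:ℝ) ≤ (s:ℝ) * A := by positivity
      nlinarith [hsR, hA, hq]
    linarith only [h2, h3]
  have h1R : 1 + R ≤ (s * C) ^ 2 := by
    have h0 : u * u ≤ (s * C) * (s * C) :=
      mul_le_mul hub hub (by linarith only [hu1]) (by linarith only [hu1, hub])
    nlinarith [hu2, h0]
  have hsC : (0:ℝ) < s * C := by nlinarith [hsR, hC1]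
  have hlog1R : Real.log (1 + R) ≤ D * Real.log s := by
    have h1 : Real.log (1 + R) ≤ 2 * Real.log (s * C) := by
      calc Real.log (1 + R) ≤ Real.log ((s * C) ^ 2) := Real.log_le_log (by linarith) h1R
        _ = 2 * Real.log (s * C) := by rw [Real.log_pow]; push_cast; ring
    have h2 : Real.log (s * C) = Real.log s + Real.log C := by
      rw [Real.log_mul (by positivity) (by positivity)]
    have hlogs2 : Real.log 2 ≤ Real.log s := Real.log_le_log (by norm_num) hsR
    have h3 : 2 * Real.log C ≤ (2 * Real.log C / Real.log 2) * Real.log s := by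
      have h4 : (2 * Real.log C / Real.log 2) * Real.log 2 = 2 * Real.log C := by
        field_simp
      have h5 : (2 * Real.log C / Real.log 2) * Real.log 2
          ≤ (2 * Real.log C / Real.log 2) * Real.log s :=
        mul_le_mul_of_nonneg_left hlogs2 (by positivity)
      linarith
    rw [hDdef]
    linarith only [h1, h2, h3]
  have hfinal : R ≤ K * s * Real.log s := by
    have hlogs2 : Real.log 2 ≤ Real.log s := Real.log_le_log (by norm_num) hsR
    have h1 : A ≤ (A / Real.log 2) * Real.log s := by
      have h4 : (A / Real.log 2) * Real.log 2 = A := by field_simp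
      have h5 := mul_le_mul_of_nonneg_left hlogs2 (by positivity : (0:ℝ) ≤ A / Real.log 2)
      linarith only [h4, h5]
    have h2 : R ≤ s * ((A / Real.log 2) * Real.log s) + s * q * (D * Real.log s) := by
      have h5 := mul_le_mul_of_nonneg_left h1 (by linarith : (0:ℝ) ≤ (s:ℝ))
      have h6 := mul_le_mul_of_nonneg_left hlog1R
        (by positivity : (0:ℝ) ≤ (s:ℝ) * q)
      exact hstar.trans (add_le_add h5 h6)
    rw [hKdef]
    linarith only [h2]
  -- conclusion
  have hrle : (r : ℝ) ≤ Real.exp (K * s * Real.log s) := by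
    calc (r:ℝ) ≤ (r:ℝ) + 1 := by linarith
      _ = Real.exp R := by rw [hRdef, Real.exp_log hr1]
      _ ≤ Real.exp (K * s * Real.log s) := Real.exp_le_exp.2 hfinal
  calc ((r:ℕ) : ℝ≥0∞) = ENNReal.ofReal (r:ℝ) := by
        rw [ENNReal.ofReal_natCast]
    _ ≤ ENNReal.ofReal (Real.exp (K * s * Real.log s)) := ENNReal.ofReal_le_ofReal hrle
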